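/- Let W be a real symmetric n×n matrix with nonnegative entries satisfying W𝟙 = 𝟙, and let α ≥ 0. Then the matrix B = α(I − 2·diag(W) + W) is symmetric positive semidefinite, where diag(W) denotes the diagonal matrix whose diagonal entries agree with those of W and whose off-diagonal entries are zero. -/

import Mathlib

open Matrix

/-- For a symmetric doubly stochastic matrix `W` with nonnegative entries and `α ≥ 0`,
the matrix `B = α (I − 2 diag(W) + W)` is symmetric positive semidefinite. -/
theorem stmt2 {n : ℕ} (W : Matrix (Fin n) (Fin n) ℝ) (hsymm : W.IsSymm)
    (hnonneg : ∀ i j, 0 ≤ W i j)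
    (hstoch : W.mulVec (fun _ => 1) = fun _ => 1)
    (α : ℝ) (hα : 0 ≤ α) :
    (α • ((1 : Matrix (Fin n) (Fin n) ℝ)
        - 2 • Matrix.diagonal (fun i => W i i) + W)).PosSemidef := by
  have hWij : ∀ i j, W j i = W i j := fun i j => by
    have := congrFun (congrFun hsymm i) j
    simpa [Matrix.transpose_apply] using this
  have hrow : ∀ i, ∑ j, W i j = 1 := fun i => by
    have := congrFun hstoch i
    simpa [Matrix.mulVec, dotProduct] using this
  have htwo : (2 • Matrix.diagonal (fun i => W i i) : Matrix (Fin n) (Fin n) ℝ)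
      = Matrix.diagonal (fun i => 2 * W i i) := by
    ext i j
    by_cases h : i = j <;> simp [Matrix.smul_apply, Matrix.diagonal_apply, h]
  rw [htwo]
  rw [Matrix.posSemidef_iff_dotProduct_mulVec]
  constructor
  · -- Hermitian
    show _ = _
    ext i j
    simp only [Matrix.conjTranspose_apply, Matrix.smul_apply, Matrix.add_apply,
      Matrix.sub_apply, Matrix.one_apply, Matrix.diagonal_apply, star_trivial,
      smul_eq_mul]
    by_cases h : i = j
    · subst h; simp
    · simp [h, Ne.symm h, hWij i j]
  · intro x
    have star_x : star x = x := by simp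
    rw [star_x]
    set s2 := ∑ i, x i ^ 2 with hs2
    set d := ∑ i, W i i * x i ^ 2 with hd
    set A := ∑ i, ∑ j, W i j * (x i * x j) with hA
    have hL : x ⬝ᵥ ((α • ((1 : Matrix (Fin n) (Fin n) ℝ)
        - Matrix.diagonal (fun i => 2 * W i i) + W)) *ᵥ x)
        = α * (s2 - 2 * d + A) := by
      have h1 : x ⬝ᵥ ((α • ((1 : Matrix (Fin n) (Fin n) ℝ)
          - Matrix.diagonal (fun i => 2 * W i i) + W)) *ᵥ x)
          = ∑ i, ∑ j, (α * (if i = j then x i * x j else 0)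
              - α * 2 * (if i = j then W i i * (x i * x j) else 0)
              + α * (W i j * (x i * x j))) := by
        simp only [dotProduct, Matrix.mulVec, Finset.mul_sum]
        refine Finset.sum_congr rfl fun i _ => Finset.sum_congr rfl fun j _ => ?_
        simp only [Matrix.smul_apply, Matrix.add_apply, Matrix.sub_apply,
          Matrix.one_apply, Matrix.diagonal_apply, smul_eq_mul]
        by_cases h : i = j <;> simp [h] <;> ring
      rw [h1]
      have h2 : ∀ i : Fin n, ∑ j, (if i = j then x i * x j else 0) = x i ^ 2 := by
        intro i; simp only [Finset.sum_ite_eq, Finset.mem_univ, if_true]; ring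
      have h3 : ∀ i : Fin n, ∑ j, (if i = j then W i i * (x i * x j) else 0)
          = W i i * x i ^ 2 := by
        intro i; simp only [Finset.sum_ite_eq, Finset.mem_univ, if_true]; ring
      simp only [Finset.sum_add_distrib, Finset.sum_sub_distrib, ← Finset.mul_sum,
        h2, h3]
      rw [hs2, hd, hA]; ring
    rw [hL]
    have hC : s2 - 2 * d + A
        = (1/2) * ∑ i, ∑ j, (if i = j then 0 else W i j * (x i + x j)^2) := by
      have hfull : ∑ i, ∑ j, W i j * (x i + x j)^2 = s2 + s2 + 2 * A := by
        have e1 : ∀ i : Fin n, ∀ j : Fin n, W i j * (x i + x j)^2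
            = W i j * x i ^ 2 + W i j * x j ^ 2 + 2 * (W i j * (x i * x j)) := by
          intros; ring
        simp only [e1, Finset.sum_add_distrib]
        have t1 : ∑ i, ∑ j, W i j * x i ^ 2 = s2 := by
          simp only [← Finset.sum_mul, hrow, one_mul, hs2]
        have t2 : ∑ i : Fin n, ∑ j : Fin n, W i j * x j ^ 2 = s2 := by
          rw [Finset.sum_comm]
          have : ∀ j : Fin n, ∑ i : Fin n, W i j * x j ^ 2 = x j ^ 2 := by
            intro j
            rw [← Finset.sum_mul]
            have : ∑ i : Fin n, W i j = 1 := by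
              simp only [hWij]; exact hrow j
            rw [this, one_mul]
          simp only [this, hs2]
        rw [t1, t2]
        simp only [← Finset.mul_sum, ← hA]
      have hdiag : ∑ i, ∑ j, (if i = j then 0 else W i j * (x i + x j)^2)
          = (∑ i, ∑ j, W i j * (x i + x j)^2) - 4 * d := by
        have : ∀ i : Fin n, ∑ j, (if i = j then 0 else W i j * (x i + x j)^2)
            = (∑ j, W i j * (x i + x j)^2) - W i i * (2 * x i)^2 := by
          intro i
          have : ∀ j : Fin n, (if i = j then 0 else W i j * (x i + x j)^2)
              = W i j * (x i + x j)^2 - (if i = j then W i j * (x i + x j)^2 else 0) := by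
            intro j; by_cases h : i = j <;> simp [h]
          simp only [this, Finset.sum_sub_distrib, Finset.sum_ite_eq,
            Finset.mem_univ, if_true]
          ring
        simp only [this, Finset.sum_sub_distrib]
        rw [hd, Finset.mul_sum]
        congr 1
        refine Finset.sum_congr rfl fun i _ => by ring
      rw [hdiag, hfull]; ring
    rw [hC]
    have hsum : 0 ≤ ∑ i, ∑ j, (if i = j then 0 else W i j * (x i + x j)^2) := by
      refine Finset.sum_nonneg fun i _ => Finset.sum_nonneg fun j _ => ?_
      by_cases h : i = j
      · simp [h]
      · simp only [h, if_false]
        exact mul_nonneg (hnonneg i j) (sq_nonneg _)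
    have := mul_nonneg hα (mul_nonneg (by norm_num : (0:ℝ) ≤ 1/2) hsum)
    linarith
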